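/- Let W denote the Lambert W function (principal branch). For a > 0 and μ ∈ (0, ∞), the solution of h(a/t) = μ, where h(x) = (ln(1+x) − x/(1+x))/ln 2, is t = −a/(1 + 1/W(−e^{−(μ ln 2 + 1)})), and this t is positive because W(−e^{−(μ ln 2+1)}) ∈ (−1, 0). -/

import Mathlib

/-- Closed-form time allocation via the Lambert W function: if w is the principal-branch
value of W at −e^{−(μ ln 2 + 1)} (i.e. w·e^w = −e^{−(μ ln 2+1)} with w ≥ −1), a > 0 and
μ > 0, then w ∈ (−1,0), t = −a/(1 + 1/w) is positive, and t solves h(a/t) = μ where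
h(x) = (ln(1+x) − x/(1+x))/ln 2. -/
theorem lambert_time_allocation (a μ w : ℝ) (ha : 0 < a) (hμ : 0 < μ)
    (hw : w * Real.exp w = -Real.exp (-(μ * Real.log 2 + 1))) (hwpr : -1 ≤ w) :
    w ∈ Set.Ioo (-1 : ℝ) 0 ∧
    0 < -a / (1 + 1 / w) ∧
    (Real.log (1 + a / (-a / (1 + 1 / w)))
        - (a / (-a / (1 + 1 / w))) / (1 + a / (-a / (1 + 1 / w)))) / Real.log 2 = μ := by
  have hlog2 : 0 < Real.log 2 := Real.log_pos (by norm_num)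
  have hexp : 0 < Real.exp (-(μ * Real.log 2 + 1)) := Real.exp_pos _
  have hwneg : w < 0 := by
    nlinarith [Real.exp_pos w, mul_pos (Real.exp_pos w) hexp]
  have hwgt : -1 < w := by
    rcases lt_or_eq_of_le hwpr with h | h
    · exact h
    · exfalso
      rw [← h] at hw
      have : Real.exp (-1) = Real.exp (-(μ * Real.log 2 + 1)) := by linarith
      have := Real.exp_injective this
      nlinarith
  have hw0 : w ≠ 0 := ne_of_lt hwneg
  have hnw : 0 < -w := by linarith
  -- logarithmic identity
  have hlogw : Real.log (-w) = -(μ * Real.log 2 + 1) - w := by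
    have h1 : (-w) * Real.exp w = Real.exp (-(μ * Real.log 2 + 1)) := by linarith
    have h2 : Real.exp (Real.log (-w) + w) = Real.exp (-(μ * Real.log 2 + 1)) := by
      rw [Real.exp_add, Real.exp_log hnw]; exact h1
    have := Real.exp_injective h2
    linarith
  have hs : 1 + 1 / w < 0 := by
    rw [show (1 : ℝ) + 1 / w = (w + 1) / w by field_simp]
    exact div_neg_of_pos_of_neg (by linarith) hwneg
  have hs0 : (1 : ℝ) + 1 / w ≠ 0 := ne_of_lt hs
  refine ⟨⟨hwgt, hwneg⟩, div_pos_of_neg_of_neg (by linarith) hs, ?_⟩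
  have key : a / (-a / (1 + 1 / w)) = -(1 + 1 / w) := by
    field_simp
  rw [key]
  have h1 : (1 : ℝ) + -(1 + 1 / w) = (-w)⁻¹ := by field_simp; ring
  rw [h1, Real.log_inv, hlogw]
  have h2 : -(1 + 1 / w) / (-w)⁻¹ = w + 1 := by field_simp
  rw [h2]
  field_simp
  ring
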